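/- Let r, μ ∈ ℝ, σ ≠ 0, γ > 0 with γ ≠ 1, α ∉ {0,1} with α/(1−γ) > 0 and (1/α − 1)·(1−γ) ≥ 0, 0 ≤ λ ≤ 1, and ρ₁ ≥ ρ₂. Suppose (θ₁, θ₂) is a positive solution of the Epstein–Zin equilibrium ODE system (M-HJB) on [t₀,T], where 0 ≤ t₀ < T. Then, with δ := exp( −T·|1−γ|·| r − ρ₁/α + (μ−r)²/(2γσ²) | ), one has θ₂(t) ≥ θ₁(t) ≥ δ > 0 for every t ∈ [t₀,T]. -/

import Mathlib

noncomputable section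

/-- `S(t) = λ θ₁(t) + (1-λ) θ₂(t)`. -/
def mhjbS (lam : ℝ) (θ₁ θ₂ : ℝ → ℝ) (t : ℝ) : ℝ :=
  lam * θ₁ t + (1 - lam) * θ₂ t

/-- `D(t) = λ θ₁(t)^β + (1-λ) θ₂(t)^β` with `β = (1-γ-α)/(1-γ)` (real powers). -/
def mhjbD (γ α lam : ℝ) (θ₁ θ₂ : ℝ → ℝ) (t : ℝ) : ℝ :=
  lam * θ₁ t ^ ((1 - γ - α) / (1 - γ)) + (1 - lam) * θ₂ t ^ ((1 - γ - α) / (1 - γ))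

/-- `C(t) = S(t)^{1/(α-1)} D(t)^{-1/(α-1)}` (real powers). -/
def mhjbC (γ α lam : ℝ) (θ₁ θ₂ : ℝ → ℝ) (t : ℝ) : ℝ :=
  mhjbS lam θ₁ θ₂ t ^ ((1 : ℝ) / (α - 1)) * mhjbD γ α lam θ₁ θ₂ t ^ (-((1 : ℝ) / (α - 1)))

/-- A positive solution of the Epstein–Zin equilibrium ODE system (M-HJB) on `[t₀, T]`:
differentiable positive functions `θ₁, θ₂` with continuous derivatives `θ₁', θ₂'` such that,
for `i = 1, 2` and all `t ∈ [t₀, T]`,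
`θᵢ'(t) + (1-γ)θᵢ(t)[r + (μ-r)²/(2γσ²) - C(t)] - (1-γ)ρᵢ α⁻¹ θᵢ(t)
  + α⁻¹(1-γ) θᵢ(t)^β S(t)^{α/(α-1)} D(t)^{-α/(α-1)} = 0`,
with terminal conditions `θ₁(T) = θ₂(T) = 1`. -/
def IsMHJBSolution (r μ σ ρ₁ ρ₂ γ α lam t₀ T : ℝ) (θ₁ θ₂ : ℝ → ℝ) : Prop :=
  ∃ θ₁' θ₂' : ℝ → ℝ,
    ContinuousOn θ₁' (Set.Icc t₀ T) ∧ ContinuousOn θ₂' (Set.Icc t₀ T) ∧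
    (∀ t ∈ Set.Icc t₀ T, HasDerivWithinAt θ₁ (θ₁' t) (Set.Icc t₀ T) t) ∧
    (∀ t ∈ Set.Icc t₀ T, HasDerivWithinAt θ₂ (θ₂' t) (Set.Icc t₀ T) t) ∧
    (∀ t ∈ Set.Icc t₀ T, 0 < θ₁ t) ∧ (∀ t ∈ Set.Icc t₀ T, 0 < θ₂ t) ∧
    θ₁ T = 1 ∧ θ₂ T = 1 ∧
    (∀ t ∈ Set.Icc t₀ T,
      θ₁' t
        + (1 - γ) * θ₁ t * (r + (μ - r) ^ 2 / (2 * γ * σ ^ 2) - mhjbC γ α lam θ₁ θ₂ t)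
        - (1 - γ) * ρ₁ * α⁻¹ * θ₁ t
        + α⁻¹ * (1 - γ) * θ₁ t ^ ((1 - γ - α) / (1 - γ))
          * mhjbS lam θ₁ θ₂ t ^ (α / (α - 1))
          * mhjbD γ α lam θ₁ θ₂ t ^ (-(α / (α - 1))) = 0) ∧
    (∀ t ∈ Set.Icc t₀ T,
      θ₂' t
        + (1 - γ) * θ₂ t * (r + (μ - r) ^ 2 / (2 * γ * σ ^ 2) - mhjbC γ α lam θ₁ θ₂ t)
        - (1 - γ) * ρ₂ * α⁻¹ * θ₂ t
        + α⁻¹ * (1 - γ) * θ₂ t ^ ((1 - γ - α) / (1 - γ))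
          * mhjbS lam θ₁ θ₂ t ^ (α / (α - 1))
          * mhjbD γ α lam θ₁ θ₂ t ^ (-(α / (α - 1))) = 0)

end

set_option maxHeartbeats 1000000 in
/-- Proposition of Section 5.2, lower-bound step: for a positive solution of (M-HJB)
with `ρ₁ ≥ ρ₂` and `(1/α - 1)(1-γ) ≥ 0`, one has
`θ₂(t) ≥ θ₁(t) ≥ δ > 0` on `[t₀, T]`, where
`δ = exp(-T |1-γ| |r - ρ₁/α + (μ-r)²/(2γσ²)|)`. -/
theorem statement9 (r μ σ ρ₁ ρ₂ γ α lam t₀ T : ℝ)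
    (hσ : σ ≠ 0) (hγ : 0 < γ) (hγ1 : γ ≠ 1) (hα0 : α ≠ 0) (hα1 : α ≠ 1)
    (hαγ : 0 < α / (1 - γ)) (hsgn : 0 ≤ (1 / α - 1) * (1 - γ))
    (hl0 : 0 ≤ lam) (hl1 : lam ≤ 1) (hρ : ρ₂ ≤ ρ₁)
    (ht₀ : 0 ≤ t₀) (ht₀T : t₀ < T) (θ₁ θ₂ : ℝ → ℝ)
    (hsol : IsMHJBSolution r μ σ ρ₁ ρ₂ γ α lam t₀ T θ₁ θ₂) :
    ∀ t ∈ Set.Icc t₀ T,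
      0 < Real.exp (-T * |1 - γ| * |r - ρ₁ / α + (μ - r) ^ 2 / (2 * γ * σ ^ 2)|) ∧
      Real.exp (-T * |1 - γ| * |r - ρ₁ / α + (μ - r) ^ 2 / (2 * γ * σ ^ 2)|) ≤ θ₁ t ∧
      θ₁ t ≤ θ₂ t := by
  obtain ⟨θ₁', θ₂', hc₁, hc₂, hd₁, hd₂, hp₁, hp₂, hT₁, hT₂, heq₁, heq₂⟩ := hsol
  have hε : (1:ℝ) - γ ≠ 0 := sub_ne_zero.mpr fun h => hγ1 h.symm
  have hα1' : α - 1 ≠ 0 := sub_ne_zero.mpr hα1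
  have hP : 0 < (1 - γ) / α := by
    have h := inv_pos.mpr hαγ
    rwa [inv_div] at h
  have hPα : 0 < α⁻¹ * (1 - γ) := by
    rw [mul_comm, ← div_eq_mul_inv]; exact hP
  have hαlt : α < 1 := by
    rcases lt_or_ge α 1 with h | h
    · exact h
    · exfalso
      have h1 : 1 < α := lt_of_le_of_ne h (Ne.symm hα1)
      have hkey : (1 / α - 1) * (1 - γ) = (1 - α) * ((1 - γ) / α) := by
        field_simp
      have hneg : (1 - α) * ((1 - γ) / α) < 0 :=
        mul_neg_of_neg_of_pos (by linarith) hP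
      rw [hkey] at hsgn; linarith
  have hcases := div_pos_iff.mp hαγ
  set b : ℝ := (1 - γ - α) / (1 - γ) with hbdef
  have hb1 : b - 1 = -(α / (1 - γ)) := by
    rw [hbdef]; field_simp; ring
  have hb1neg : b - 1 < 0 := by rw [hb1]; linarith [hαγ]
  have hS : ∀ t ∈ Set.Icc t₀ T, 0 < mhjbS lam θ₁ θ₂ t := by
    intro t ht
    have h1 := hp₁ t ht; have h2 := hp₂ t ht
    unfold mhjbS
    rcases hl0.lt_or_eq with h | h
    · nlinarith [mul_pos h h1, mul_nonneg (by linarith : (0:ℝ) ≤ 1 - lam) h2.le]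
    · rw [← h]; simpa using h2
  have hD : ∀ t ∈ Set.Icc t₀ T, 0 < mhjbD γ α lam θ₁ θ₂ t := by
    intro t ht
    have h1 := Real.rpow_pos_of_pos (hp₁ t ht) ((1 - γ - α) / (1 - γ))
    have h2 := Real.rpow_pos_of_pos (hp₂ t ht) ((1 - γ - α) / (1 - γ))
    unfold mhjbD
    rcases hl0.lt_or_eq with h | h
    · nlinarith [mul_pos h h1, mul_nonneg (by linarith : (0:ℝ) ≤ 1 - lam) h2.le]
    · rw [← h]; simpa using h2
  have hE : ∀ t ∈ Set.Icc t₀ T,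
      0 < mhjbS lam θ₁ θ₂ t ^ (α / (α - 1)) * mhjbD γ α lam θ₁ θ₂ t ^ (-(α / (α - 1))) :=
    fun t ht => mul_pos (Real.rpow_pos_of_pos (hS t ht) _) (Real.rpow_pos_of_pos (hD t ht) _)
  have hC : ∀ t ∈ Set.Icc t₀ T, 0 < mhjbC γ α lam θ₁ θ₂ t :=
    fun t ht => mul_pos (Real.rpow_pos_of_pos (hS t ht) _) (Real.rpow_pos_of_pos (hD t ht) _)
  -- quotient formulas
  have hrat₁ : ∀ t ∈ Set.Icc t₀ T, θ₁' t / θ₁ t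
      = (1 - γ) * ρ₁ * α⁻¹
        - (1 - γ) * (r + (μ - r) ^ 2 / (2 * γ * σ ^ 2) - mhjbC γ α lam θ₁ θ₂ t)
        - α⁻¹ * (1 - γ) * θ₁ t ^ (b - 1)
          * (mhjbS lam θ₁ θ₂ t ^ (α / (α - 1)) * mhjbD γ α lam θ₁ θ₂ t ^ (-(α / (α - 1)))) := by
    intro t ht
    have hx := (hp₁ t ht).ne'
    have hθ : θ₁' t = (1 - γ) * ρ₁ * α⁻¹ * θ₁ t
        - (1 - γ) * θ₁ t * (r + (μ - r) ^ 2 / (2 * γ * σ ^ 2) - mhjbC γ α lam θ₁ θ₂ t)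
        - α⁻¹ * (1 - γ) * θ₁ t ^ b
          * mhjbS lam θ₁ θ₂ t ^ (α / (α - 1)) * mhjbD γ α lam θ₁ θ₂ t ^ (-(α / (α - 1))) := by
      linarith [heq₁ t ht]
    have hxe : θ₁ t ^ (b - 1) = θ₁ t ^ b / θ₁ t := Real.rpow_sub_one hx b
    rw [div_eq_iff hx, hθ, hxe]
    field_simp
  have hrat₂ : ∀ t ∈ Set.Icc t₀ T, θ₂' t / θ₂ t
      = (1 - γ) * ρ₂ * α⁻¹
        - (1 - γ) * (r + (μ - r) ^ 2 / (2 * γ * σ ^ 2) - mhjbC γ α lam θ₁ θ₂ t)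
        - α⁻¹ * (1 - γ) * θ₂ t ^ (b - 1)
          * (mhjbS lam θ₁ θ₂ t ^ (α / (α - 1)) * mhjbD γ α lam θ₁ θ₂ t ^ (-(α / (α - 1)))) := by
    intro t ht
    have hx := (hp₂ t ht).ne'
    have hθ : θ₂' t = (1 - γ) * ρ₂ * α⁻¹ * θ₂ t
        - (1 - γ) * θ₂ t * (r + (μ - r) ^ 2 / (2 * γ * σ ^ 2) - mhjbC γ α lam θ₁ θ₂ t)
        - α⁻¹ * (1 - γ) * θ₂ t ^ b
          * mhjbS lam θ₁ θ₂ t ^ (α / (α - 1)) * mhjbD γ α lam θ₁ θ₂ t ^ (-(α / (α - 1))) := by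
      linarith [heq₂ t ht]
    have hxe : θ₂ t ^ (b - 1) = θ₂ t ^ b / θ₂ t := Real.rpow_sub_one hx b
    rw [div_eq_iff hx, hθ, hxe]
    field_simp
  -- Step B : θ₁ ≤ θ₂ on the interval
  have hle : ∀ t ∈ Set.Icc t₀ T, θ₁ t ≤ θ₂ t := by
    by_contra hcon
    push_neg at hcon
    obtain ⟨t₁, ht₁, hgt⟩ := hcon
    set v : ℝ → ℝ := fun t => Real.log (θ₁ t) - Real.log (θ₂ t) with hvdef
    have hv' : ∀ t ∈ Set.Icc t₀ T,
        HasDerivWithinAt v (θ₁' t / θ₁ t - θ₂' t / θ₂ t) (Set.Icc t₀ T) t := fun t ht =>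
      ((hd₁ t ht).log (hp₁ t ht).ne').sub ((hd₂ t ht).log (hp₂ t ht).ne')
    have hvc : ContinuousOn v (Set.Icc t₀ T) := fun t ht => (hv' t ht).continuousWithinAt
    have hvT : v T = 0 := by simp [hvdef, hT₁, hT₂]
    have hv₁ : 0 < v t₁ := sub_pos.mpr (Real.log_lt_log (hp₂ t₁ ht₁) hgt)
    clear_value v
    have hkey : ∀ t ∈ Set.Icc t₀ T, θ₂ t < θ₁ t → 0 ≤ θ₁' t / θ₁ t - θ₂' t / θ₂ t := by
      intro t ht hgt'
      rw [hrat₁ t ht, hrat₂ t ht]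
      have hmono : θ₁ t ^ (b - 1) ≤ θ₂ t ^ (b - 1) :=
        Real.rpow_le_rpow_of_nonpos (hp₂ t ht) hgt'.le hb1neg.le
      have hEpos := hE t ht
      have h1 : 0 ≤ α⁻¹ * (1 - γ) * (ρ₁ - ρ₂) := mul_nonneg hPα.le (by linarith)
      have h2 := mul_le_mul_of_nonneg_right
        (mul_le_mul_of_nonneg_left hmono hPα.le) hEpos.le
      linarith [h1, h2]
    have ht₀t₁ := ht₁.1
    have ht₁T := ht₁.2
    set c := v t₁ / 2 with hcdef
    clear_value c
    set A := Set.Icc t₁ T ∩ v ⁻¹' Set.Iic c with hAdef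
    have hsub : Set.Icc t₁ T ⊆ Set.Icc t₀ T := Set.Icc_subset_Icc ht₀t₁ le_rfl
    have hAclosed : IsClosed A :=
      (hvc.mono hsub).preimage_isClosed_of_isClosed isClosed_Icc isClosed_Iic
    have hTA : T ∈ A := by
      refine ⟨⟨ht₁T, le_rfl⟩, ?_⟩
      simp only [Set.mem_preimage, Set.mem_Iic, hvT]
      rw [hcdef]; linarith
    have hAne : A.Nonempty := ⟨T, hTA⟩
    have hbdd : BddBelow A := ⟨t₁, fun x hx => hx.1.1⟩
    set t₂ := sInf A with ht₂def
    have ht₂A : t₂ ∈ A := hAclosed.csInf_mem hAne hbdd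
    have ht₂mem : t₂ ∈ Set.Icc t₁ T := ht₂A.1
    have hvt₂ : v t₂ ≤ c := ht₂A.2
    have ht₁t₂ : t₁ < t₂ := by
      rcases lt_or_eq_of_le ht₂mem.1 with h | h
      · exact h
      · exfalso; rw [← h] at hvt₂; rw [hcdef] at hvt₂; linarith
    have hnotA : ∀ s, t₁ ≤ s → s < t₂ → c < v s := by
      intro s hs1 hs2
      by_contra hns
      push_neg at hns
      have hsA : s ∈ A := ⟨⟨hs1, le_trans hs2.le ht₂mem.2⟩, hns⟩
      exact absurd (csInf_le hbdd hsA) (not_le.mpr hs2)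
    have hmonoV : MonotoneOn v (Set.Icc t₁ t₂) := by
      apply monotoneOn_of_deriv_nonneg (convex_Icc t₁ t₂)
        (hvc.mono (Set.Icc_subset_Icc ht₀t₁ ht₂mem.2))
      · intro x hx
        rw [interior_Icc] at hx
        have hx0 : t₀ < x := lt_of_le_of_lt ht₀t₁ hx.1
        have hxT : x < T := lt_of_lt_of_le hx.2 ht₂mem.2
        have hx' : x ∈ Set.Icc t₀ T := ⟨hx0.le, hxT.le⟩
        exact ((hv' x hx').hasDerivAt (Icc_mem_nhds hx0 hxT)).differentiableAt.differentiableWithinAt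
      · intro x hx
        rw [interior_Icc] at hx
        have hx0 : t₀ < x := lt_of_le_of_lt ht₀t₁ hx.1
        have hxT : x < T := lt_of_lt_of_le hx.2 ht₂mem.2
        have hx' : x ∈ Set.Icc t₀ T := ⟨hx0.le, hxT.le⟩
        have hDa := (hv' x hx').hasDerivAt (Icc_mem_nhds hx0 hxT)
        rw [hDa.deriv]
        apply hkey x hx'
        have hvx : c < v x := hnotA x hx.1.le hx.2
        have hvx0 : 0 < v x := by rw [hcdef] at hvx; linarith
        rw [hvdef] at hvx0
        simp only [] at hvx0
        have hlog : Real.log (θ₂ x) < Real.log (θ₁ x) := sub_pos.mp hvx0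
        exact (Real.log_lt_log_iff (hp₂ x hx') (hp₁ x hx')).mp hlog
    have h12 : v t₁ ≤ v t₂ :=
      hmonoV ⟨le_rfl, ht₁t₂.le⟩ ⟨ht₁t₂.le, le_rfl⟩ ht₁t₂.le
    rw [hcdef] at hvt₂
    linarith
  -- Step C : lower bound
  have hκ0 : 0 ≤ |1 - γ| * |r - ρ₁ / α + (μ - r) ^ 2 / (2 * γ * σ ^ 2)| :=
    mul_nonneg (abs_nonneg _) (abs_nonneg _)
  set κ := |1 - γ| * |r - ρ₁ / α + (μ - r) ^ 2 / (2 * γ * σ ^ 2)| with hκdef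
  have hbound : ∀ t ∈ Set.Icc t₀ T, θ₁' t / θ₁ t ≤ κ := by
    intro t ht
    rw [hrat₁ t ht]
    have hCpos := hC t ht
    have hEpos := hE t ht
    have hSpos := hS t ht
    have hDpos := hD t ht
    have hθpos := hp₁ t ht
    have hxpow : 0 < θ₁ t ^ (b - 1) := Real.rpow_pos_of_pos hθpos _
    have hlin : (1 - γ) * ρ₁ * α⁻¹ - (1 - γ) * (r + (μ - r) ^ 2 / (2 * γ * σ ^ 2)) ≤ κ := by
      have h1 : (1 - γ) * ρ₁ * α⁻¹ - (1 - γ) * (r + (μ - r) ^ 2 / (2 * γ * σ ^ 2))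
          = -((1 - γ) * (r - ρ₁ / α + (μ - r) ^ 2 / (2 * γ * σ ^ 2))) := by
        rw [div_eq_mul_inv]; ring
      rw [h1]
      calc -((1 - γ) * (r - ρ₁ / α + (μ - r) ^ 2 / (2 * γ * σ ^ 2)))
          ≤ |(1 - γ) * (r - ρ₁ / α + (μ - r) ^ 2 / (2 * γ * σ ^ 2))| := neg_le_abs _
        _ = κ := by rw [abs_mul, hκdef]
    have hnl : (1 - γ) * mhjbC γ α lam θ₁ θ₂ t
        - α⁻¹ * (1 - γ) * θ₁ t ^ (b - 1)
          * (mhjbS lam θ₁ θ₂ t ^ (α / (α - 1)) * mhjbD γ α lam θ₁ θ₂ t ^ (-(α / (α - 1)))) ≤ 0 := by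
      rcases hcases with ⟨hα, hγ'⟩ | ⟨hα, hγ'⟩
      · -- 0 < α, 0 < 1 - γ
        have hinv : 1 ≤ α⁻¹ := one_le_inv_iff₀.mpr ⟨hα, hαlt.le⟩
        have hqe : α / (α - 1) = 1 / (α - 1) + 1 := by field_simp; ring
        have hqe' : -(α / (α - 1)) = -(1 / (α - 1)) + -1 := by field_simp; ring
        have hEeq : mhjbS lam θ₁ θ₂ t ^ (α / (α - 1)) * mhjbD γ α lam θ₁ θ₂ t ^ (-(α / (α - 1)))
            = mhjbC γ α lam θ₁ θ₂ t * (mhjbS lam θ₁ θ₂ t / mhjbD γ α lam θ₁ θ₂ t) := by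
          rw [hqe', hqe, Real.rpow_add hSpos, Real.rpow_add hDpos, Real.rpow_one,
            Real.rpow_neg_one]
          simp only [mhjbC]
          field_simp
        have hm : θ₂ t ^ (b - 1) ≤ θ₁ t ^ (b - 1) :=
          Real.rpow_le_rpow_of_nonpos hθpos (hle t ht) hb1neg.le
        have hDle : mhjbD γ α lam θ₁ θ₂ t ≤ θ₁ t ^ (b - 1) * mhjbS lam θ₁ θ₂ t := by
          simp only [mhjbD, mhjbS, ← hbdef]
          have e1 : θ₁ t ^ (b - 1) * θ₁ t = θ₁ t ^ b := by
            rw [← Real.rpow_add_one hθpos.ne' (b - 1)]; norm_num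
          have e1' : lam * (θ₁ t ^ (b - 1) * θ₁ t) = lam * θ₁ t ^ b := by rw [e1]
          have e2 : θ₂ t ^ (b - 1) * θ₂ t = θ₂ t ^ b := by
            rw [← Real.rpow_add_one (hp₂ t ht).ne' (b - 1)]; norm_num
          have h1 : θ₂ t ^ b ≤ θ₁ t ^ (b - 1) * θ₂ t := by
            rw [← e2]; exact mul_le_mul_of_nonneg_right hm (hp₂ t ht).le
          have h2 : (1 - lam) * (θ₂ t ^ b) ≤ (1 - lam) * (θ₁ t ^ (b - 1) * θ₂ t) :=
            mul_le_mul_of_nonneg_left h1 (by linarith)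
          nlinarith [e1', h2]
        rw [hEeq, sub_nonpos]
        have hmain : (1 - γ) * mhjbC γ α lam θ₁ θ₂ t * mhjbD γ α lam θ₁ θ₂ t
            ≤ α⁻¹ * (1 - γ) * θ₁ t ^ (b - 1)
              * (mhjbC γ α lam θ₁ θ₂ t * mhjbS lam θ₁ θ₂ t) := by
          have ha := mul_le_mul_of_nonneg_left hDle
            (mul_nonneg hγ'.le hCpos.le)
          have hb2 : 0 ≤ (1 - γ) * mhjbC γ α lam θ₁ θ₂ t
              * (θ₁ t ^ (b - 1) * mhjbS lam θ₁ θ₂ t) :=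
            mul_nonneg (mul_nonneg hγ'.le hCpos.le) (mul_nonneg hxpow.le hSpos.le)
          have hc3 := mul_le_mul_of_nonneg_right hinv hb2
          nlinarith [ha, hc3]
        rw [mul_div_assoc' , ← mul_div_assoc, le_div_iff₀ hDpos]
        nlinarith [hmain]
      · -- α < 0, 1 - γ < 0
        have h1 : (1 - γ) * mhjbC γ α lam θ₁ θ₂ t < 0 := mul_neg_of_neg_of_pos hγ' hCpos
        have h2 : 0 < α⁻¹ * (1 - γ) * θ₁ t ^ (b - 1)
            * (mhjbS lam θ₁ θ₂ t ^ (α / (α - 1)) * mhjbD γ α lam θ₁ θ₂ t ^ (-(α / (α - 1)))) :=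
          mul_pos (mul_pos hPα hxpow) hEpos
        linarith
    linarith [hlin, hnl]
  -- assemble
  intro t ht
  refine ⟨Real.exp_pos _, ?_, hle t ht⟩
  have hg : MonotoneOn (fun s => κ * s - Real.log (θ₁ s)) (Set.Icc t₀ T) := by
    apply monotoneOn_of_deriv_nonneg (convex_Icc t₀ T)
    · exact ((continuous_const.mul continuous_id).continuousOn).sub
        (fun s hs => (((hd₁ s hs).log (hp₁ s hs).ne')).continuousWithinAt)
    · intro x hx
      rw [interior_Icc] at hx
      have hx' : x ∈ Set.Icc t₀ T := ⟨hx.1.le, hx.2.le⟩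
      have hder : HasDerivAt (fun s => κ * s - Real.log (θ₁ s)) (κ - θ₁' x / θ₁ x) x := by
        have h1 : HasDerivAt (fun s : ℝ => κ * s) κ x := by
          simpa using (hasDerivAt_id x).const_mul κ
        exact h1.sub (((hd₁ x hx').hasDerivAt (Icc_mem_nhds hx.1 hx.2)).log (hp₁ x hx').ne')
      exact hder.differentiableAt.differentiableWithinAt
    · intro x hx
      rw [interior_Icc] at hx
      have hx' : x ∈ Set.Icc t₀ T := ⟨hx.1.le, hx.2.le⟩
      have hder : HasDerivAt (fun s => κ * s - Real.log (θ₁ s)) (κ - θ₁' x / θ₁ x) x := by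
        have h1 : HasDerivAt (fun s : ℝ => κ * s) κ x := by
          simpa using (hasDerivAt_id x).const_mul κ
        exact h1.sub (((hd₁ x hx').hasDerivAt (Icc_mem_nhds hx.1 hx.2)).log (hp₁ x hx').ne')
      rw [hder.deriv]
      linarith [hbound x hx']
  have hgt : κ * t - Real.log (θ₁ t) ≤ κ * T - Real.log (θ₁ T) :=
    hg ht (Set.right_mem_Icc.mpr (le_of_lt ht₀T)) ht.2
  rw [hT₁, Real.log_one] at hgt
  have hκt : 0 ≤ κ * t := mul_nonneg hκ0 (le_trans ht₀ ht.1)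
  have hlog : -(κ * T) ≤ Real.log (θ₁ t) := by linarith
  calc Real.exp (-T * |1 - γ| * |r - ρ₁ / α + (μ - r) ^ 2 / (2 * γ * σ ^ 2)|)
      = Real.exp (-(κ * T)) := by rw [hκdef]; ring_nf
    _ ≤ Real.exp (Real.log (θ₁ t)) := Real.exp_le_exp.mpr hlog
    _ = θ₁ t := Real.exp_log (hp₁ t ht)
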